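/- Let m, k, t, ℓ be positive integers with t·ℓ < k ≤ m, let A ⊆ Fin m with |A| = k, and let p : Fin m → ℝ with p_j ≥ 0 for all j. Suppose that max_{T ⊆ Fin m} ( (1+t)·|T ∩ A| − p(T) ) > 0 and that max_{T ⊆ Fin m} ( (1+t)·|T ∩ A| − p(T) ) ≥ max_{T ⊆ Fin m} ( (1 + k/ℓ)·min(|T|, t·ℓ) − p(T) ). Then |{ j ∈ A : p_j ≤ t + 1 }| ≥ k·t / (t + 1). -/

import Mathlib

open Finset

/-- The best utility achievable via the `A`-type additive component
`T ↦ (1+t)·|T ∩ A| - p(T)`. -/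
noncomputable def bestA {m : ℕ} (t : ℕ) (A : Finset (Fin m)) (p : Fin m → ℝ) : ℝ :=
  (Finset.univ : Finset (Finset (Fin m))).sup' ⟨∅, Finset.mem_univ ∅⟩
    (fun T => (1 + (t : ℝ)) * ((T ∩ A).card : ℝ) - ∑ j ∈ T, p j)

/-- The best utility achievable via the `B`-type additive components
`T ↦ (1 + k/ℓ)·min(|T|, t·ℓ) - p(T)`. -/
noncomputable def bestB {m : ℕ} (k t l : ℕ) (p : Fin m → ℝ) : ℝ :=
  (Finset.univ : Finset (Finset (Fin m))).sup' ⟨∅, Finset.mem_univ ∅⟩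
    (fun T => (1 + (k : ℝ) / (l : ℝ)) * min ((T.card : ℝ)) ((t * l : ℕ) : ℝ) - ∑ j ∈ T, p j)

/-- If the `A`-type utility is positive and at least the `B`-type
utility, then at least `k·t/(t+1)` of the items of `A` are priced at most `t + 1`. -/
theorem a_type_buys_many_items
    (m k t l : ℕ) (hm : 0 < m) (hk : 0 < k) (ht : 0 < t) (hl : 0 < l)
    (htl : t * l < k) (hkm : k ≤ m)
    (A : Finset (Fin m)) (hA : A.card = k)
    (p : Fin m → ℝ) (hp : ∀ j, 0 ≤ p j)
    (B : Finset (Fin m)) (hB : ∀ j, j ∈ B ↔ j ∈ A ∧ p j ≤ (t : ℝ) + 1)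
    (hpos : 0 < bestA t A p)
    (hge : bestB k t l p ≤ bestA t A p) :
    (k : ℝ) * t / (t + 1) ≤ (B.card : ℝ) := by
  classical
  have hBsubA : B ⊆ A := fun j hj => ((hB j).1 hj).1
  set g : Fin m → ℝ := fun j => (1 + (t : ℝ)) - p j with hg
  set S : ℝ := ∑ j ∈ B, g j with hSdef
  -- S = (1+t)|B| - p(B)
  have hSval : S = (1 + (t : ℝ)) * (B.card : ℝ) - ∑ j ∈ B, p j := by
    simp [hSdef, hg, Finset.sum_sub_distrib, Finset.sum_const, mul_comm]
    ring
  -- bestA ≤ S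
  have hbA_le : bestA t A p ≤ S := by
    apply Finset.sup'_le
    intro T _
    have hsplit : ∑ j ∈ T, p j = ∑ j ∈ T ∩ A, p j + ∑ j ∈ T \ A, p j :=
      (Finset.sum_inter_add_sum_sdiff T A p).symm
    have h1 : (1 + (t : ℝ)) * ((T ∩ A).card : ℝ) - ∑ j ∈ T, p j
        = ∑ j ∈ T ∩ A, g j - ∑ j ∈ T \ A, p j := by
      rw [hsplit]
      simp [hg, Finset.sum_sub_distrib, Finset.sum_const, mul_comm]
      ring
    have h2 : ∑ j ∈ T ∩ A, g j ≤ S := by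
      have hsplit2 : ∑ j ∈ T ∩ A, g j
          = ∑ j ∈ (T ∩ A) ∩ B, g j + ∑ j ∈ (T ∩ A) \ B, g j :=
        (Finset.sum_inter_add_sum_sdiff (T ∩ A) B g).symm
      have hneg : ∑ j ∈ (T ∩ A) \ B, g j ≤ 0 := by
        apply Finset.sum_nonpos
        intro j hj
        rcases Finset.mem_sdiff.1 hj with ⟨hjTA, hjB⟩
        have hjA : j ∈ A := (Finset.mem_inter.1 hjTA).2
        have : ¬ p j ≤ (t : ℝ) + 1 := fun h => hjB ((hB j).2 ⟨hjA, h⟩)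
        simp only [hg]
        push_neg at this
        linarith
      have hmono : ∑ j ∈ (T ∩ A) ∩ B, g j ≤ S := by
        apply Finset.sum_le_sum_of_subset_of_nonneg (Finset.inter_subset_right)
        intro j hjB _
        have := ((hB j).1 hjB).2
        simp only [hg]; linarith
      linarith
    have hnonneg : 0 ≤ ∑ j ∈ T \ A, p j := Finset.sum_nonneg fun j _ => hp j
    rw [h1]; linarith
  -- bestA ≥ S (take T = B)
  have hbA_ge : S ≤ bestA t A p := by
    have := Finset.le_sup' (s := (Finset.univ : Finset (Finset (Fin m))))
      (fun T => (1 + (t : ℝ)) * ((T ∩ A).card : ℝ) - ∑ j ∈ T, p j) (Finset.mem_univ B)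
    have hBA : B ∩ A = B := Finset.inter_eq_left.2 hBsubA
    rw [hBA] at this
    rw [hSval]
    exact this
  -- bestB ≥ value at B
  have hbB_ge : (1 + (k : ℝ) / (l : ℝ)) * min ((B.card : ℝ)) ((t * l : ℕ) : ℝ)
      - ∑ j ∈ B, p j ≤ bestB k t l p :=
    Finset.le_sup' (s := (Finset.univ : Finset (Finset (Fin m))))
      (fun T => (1 + (k : ℝ) / (l : ℝ)) * min ((T.card : ℝ)) ((t * l : ℕ) : ℝ)
        - ∑ j ∈ T, p j) (Finset.mem_univ B)
  have hkey : (1 + (k : ℝ) / (l : ℝ)) * min ((B.card : ℝ)) ((t * l : ℕ) : ℝ)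
      ≤ (1 + (t : ℝ)) * (B.card : ℝ) := by
    have := hbB_ge.trans (hge.trans hbA_le)
    rw [hSval] at this
    linarith
  have hBpos : (0 : ℝ) < B.card := by
    by_contra h
    push_neg at h
    have : B = ∅ := by
      have : B.card = 0 := by exact_mod_cast le_antisymm (by exact_mod_cast h) (Nat.zero_le _)
      exact Finset.card_eq_zero.1 this
    have hS0 : S = 0 := by simp [hSdef, this]
    have := hpos.trans_le hbA_le
    rw [hS0] at this
    exact lt_irrefl 0 this
  have hlpos : (0 : ℝ) < l := by exact_mod_cast hl
  have htlk : ((t : ℝ) * l) < k := by exact_mod_cast htl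
  rcases le_or_gt ((B.card : ℝ)) (((t * l : ℕ) : ℝ)) with hc | hc
  · -- min = |B|, contradiction
    rw [min_eq_left hc] at hkey
    have h1 : 1 + (k : ℝ) / (l : ℝ) ≤ 1 + (t : ℝ) :=
      le_of_mul_le_mul_right (by linarith [mul_comm (1 + (k : ℝ) / l) (B.card : ℝ)]) hBpos
    have : (k : ℝ) / l ≤ t := by linarith
    have : (k : ℝ) ≤ t * l := by
      rw [div_le_iff₀ hlpos] at this
      linarith
    linarith
  · rw [min_eq_right hc.le] at hkey
    have hcast : ((t * l : ℕ) : ℝ) = (t : ℝ) * l := by push_cast; ring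
    rw [hcast] at hkey
    have hkt : (k : ℝ) * t ≤ (1 + (t : ℝ)) * (B.card : ℝ) := by
      have htl0 : (0 : ℝ) ≤ (t : ℝ) * l := by positivity
      have : (1 + (k : ℝ) / l) * ((t : ℝ) * l) = (t : ℝ) * l + (k : ℝ) * t := by
        field_simp
      nlinarith
    rw [div_le_iff₀ (by positivity : (0 : ℝ) < (t : ℝ) + 1)]
    linarith [mul_comm ((B.card : ℝ)) ((t : ℝ) + 1)]
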